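/- Let A be an n-dimensional (n ≥ 2) non-degenerate evolution algebra over an algebraically closed field F of characteristic zero with dim(A²) = 1. If (A²)² ≠ 0, then A is isomorphic to the evolution algebra E_n defined on a basis {e_1,...,e_n} by e_i² = e_1 for all i and e_i e_j = 0 for i ≠ j. -/

import Mathlib

open Module

/-- The evolution algebra `E_n` realized on `Fin (n+2) → F`: `eᵢ² = e₀` for all `i`
and `eᵢeⱼ = 0` for `i ≠ j`. -/
def enMul {F : Type*} [Field F] {n : ℕ} (x y : Fin (n + 2) → F) : Fin (n + 2) → F :=
  fun k => if k = 0 then ∑ i, x i * y i else 0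

/-- The product of two subspaces. -/
def mulSub {F : Type*} [Field F] {A : Type*} [NonUnitalNonAssocRing A] [Module F A]
    (P Q : Submodule F A) : Submodule F A :=
  Submodule.span F {z | ∃ x ∈ P, ∃ y ∈ Q, z = x * y}

theorem aux_orthonormal_basis {F : Type*} [Field F] [IsAlgClosed F] [CharZero F]
    {A : Type*} [AddCommGroup A] [Module F A] [FiniteDimensional F A]
    {m : ℕ} (hrk : finrank F A = m + 1)
    (B : LinearMap.BilinForm F A) (hsymm : B.IsSymm) (hB : B.Nondegenerate)
    {w : A} (hw : B w w = 1) :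
    ∃ u : Basis (Fin (m + 1)) F A, u 0 = w ∧
      ∀ k l, B (u k) (u l) = if k = l then 1 else 0 := by
  classical
  haveI : Invertible (2 : F) := invertibleOfNonzero two_ne_zero
  have hrefl : B.IsRefl := hsymm.isRefl
  have hwa : ¬ B.IsOrtho w w := by simp [LinearMap.BilinForm.IsOrtho, hw]
  have hwne : w ≠ 0 := LinearMap.BilinForm.ne_zero_of_not_isOrtho_self w hwa
  set W : Submodule F A := B.orthogonal (F ∙ w) with hW
  have hcompl : IsCompl (F ∙ w) W :=
    LinearMap.BilinForm.isCompl_span_singleton_orthogonal hwa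
  have hWrank : finrank F W = m := by
    have h1 : finrank F (F ∙ w) = 1 := finrank_span_singleton hwne
    have := Submodule.finrank_add_eq_of_isCompl hcompl
    rw [h1, hrk] at this
    omega
  have hdisj : Disjoint W (B.orthogonal W) := by
    rw [hW, LinearMap.BilinForm.orthogonal_orthogonal hB hrefl]
    exact hcompl.disjoint.symm
  have hres_nd : (B.restrict W).Nondegenerate :=
    LinearMap.BilinForm.nondegenerate_restrict_of_disjoint_orthogonal B hrefl hdisj
  have hres_symm : (B.restrict W).IsSymm := by
    refine LinearMap.BilinForm.isSymm_def.2 fun x y => ?_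
    simpa using hsymm.eq x y
  obtain ⟨v0, hv0⟩ := LinearMap.BilinForm.exists_orthogonal_basis (LinearMap.BilinForm.isSymm_iff.1 hres_symm)
  obtain ⟨v, hvo⟩ : ∃ v : Basis (Fin m) F W,
      ∀ i j, i ≠ j → B.restrict W (v i) (v j) = 0 := by
    refine ⟨v0.reindex (finCongr hWrank), fun i j hij => ?_⟩
    rw [Module.Basis.reindex_apply, Module.Basis.reindex_apply]
    exact hv0 (fun h => hij ((finCongr hWrank).symm.injective h))
  have hvo' : (B.restrict W).iIsOrtho v :=
    LinearMap.BilinForm.iIsOrtho_def.mpr hvo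
  have hvd : ∀ i, B.restrict W (v i) (v i) ≠ 0 := fun i =>
    LinearMap.BilinForm.iIsOrtho.not_isOrtho_basis_self_of_nondegenerate hvo' hres_nd i
  have hs : ∀ i : Fin m, ∃ t : F, t ^ 2 = (B.restrict W (v i) (v i))⁻¹ :=
    fun i => IsAlgClosed.exists_pow_nat_eq _ zero_lt_two
  choose s hs using hs
  have hWw : ∀ x : W, B w (x : A) = 0 := fun x =>
    x.2 w (Submodule.mem_span_singleton_self w)
  have hres : ∀ x y : W, B (x : A) (y : A) = B.restrict W x y := fun x y => rfl
  set u : Fin (m + 1) → A := Fin.cons w (fun i => s i • ((v i : A))) with hu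
  have hBu : ∀ k l, B (u k) (u l) = if k = l then 1 else 0 := by
    intro k l
    induction k using Fin.cases with
    | zero =>
      induction l using Fin.cases with
      | zero => simpa [hu] using hw
      | succ j => simp [hu, map_smul, hWw, (Fin.succ_ne_zero j).symm]
    | succ i =>
      induction l using Fin.cases with
      | zero =>
        have h2 := hsymm.eq (s i • ((v i : A))) w
        rw [hu]
        simp only [Fin.cons_succ, Fin.cons_zero, if_neg (Fin.succ_ne_zero i)]
        rw [h2]
        simp [map_smul, hWw]
      | succ j =>
        rcases eq_or_ne i j with rfl | hij
        · rw [hu]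
          simp only [Fin.cons_succ, if_pos rfl, map_smul, LinearMap.smul_apply,
            smul_eq_mul, hres]
          have h3 : s i * (s i * B.restrict W (v i) (v i)) =
              s i ^ 2 * B.restrict W (v i) (v i) := by ring
          rw [h3, hs i, inv_mul_cancel₀ (hvd i), if_pos trivial]
        · have hne : Fin.succ i ≠ Fin.succ j := fun h => hij (Fin.succ_injective _ h)
          rw [hu]
          simp only [Fin.cons_succ, map_smul, LinearMap.smul_apply, smul_eq_mul,
            if_neg hne, hres]
          rw [hvo i j hij]
          ring
  have hio : B.iIsOrtho u :=
    LinearMap.BilinForm.iIsOrtho_def.mpr (fun k l hkl => by rw [hBu, if_neg hkl])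
  have hli : LinearIndependent F u := by
    refine LinearMap.BilinForm.linearIndependent_of_iIsOrtho hio (fun k h => ?_)
    rw [hBu, if_pos rfl] at h
    exact one_ne_zero h
  have hcard : Fintype.card (Fin (m + 1)) = finrank F A := by simp [hrk]
  refine ⟨basisOfLinearIndependentOfCardEqFinrank hli hcard, ?_, ?_⟩
  · rw [coe_basisOfLinearIndependentOfCardEqFinrank]
    simp [hu]
  · intro k l
    rw [coe_basisOfLinearIndependentOfCardEqFinrank]
    exact hBu k l

/-- **Classification, case `(A²)² ≠ 0`.** A non-degenerate evolution algebra `A` of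
dimension `n ≥ 2` over an algebraically closed field of characteristic zero with
`dim A² = 1` and `(A²)² ≠ 0` is isomorphic to `E_n`. -/
theorem stmt_5 {F : Type*} [Field F] [IsAlgClosed F] [CharZero F]
    {A : Type*} [NonUnitalNonAssocRing A] [Module F A]
    [SMulCommClass F A A] [IsScalarTower F A A]
    {n : ℕ} (b : Basis (Fin (n + 2)) F A)
    (hb : ∀ i j : Fin (n + 2), i ≠ j → b i * b j = 0)
    (hnd : ∀ x : A, (∀ a : A, x * a = 0 ∧ a * x = 0) → x = 0)
    (hsq : finrank F (mulSub (⊤ : Submodule F A) ⊤) = 1)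
    (hsq2 : mulSub (mulSub (⊤ : Submodule F A) ⊤) (mulSub (⊤ : Submodule F A) ⊤) ≠ ⊥) :
    ∃ φ : A ≃ₗ[F] (Fin (n + 2) → F), ∀ x y : A, φ (x * y) = enMul (φ x) (φ y) := by
  classical
  haveI : FiniteDimensional F A := b.finiteDimensional_of_finite
  have hfr : finrank F A = n + 2 := by rw [finrank_eq_card_basis b, Fintype.card_fin]
  have hmem : ∀ x y : A, x * y ∈ mulSub (⊤ : Submodule F A) ⊤ := fun x y =>
    Submodule.subset_span ⟨x, Submodule.mem_top, y, Submodule.mem_top, rfl⟩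
  obtain ⟨w₀, hw₀ne, hw₀⟩ := finrank_eq_one_iff'.mp hsq
  have hwne : (w₀ : A) ≠ 0 := fun h => hw₀ne (Subtype.ext h)
  -- expansion of products over the basis
  have hBrepr : ∀ x y : A, x * y = ∑ i, (b.repr x i * b.repr y i) • (b i * b i) := by
    intro x y
    conv_lhs => rw [← b.sum_repr x, ← b.sum_repr y]
    rw [Finset.sum_mul_sum]
    refine Finset.sum_congr rfl (fun i _ => ?_)
    rw [Finset.sum_eq_single i]
    · rw [smul_mul_assoc, mul_smul_comm, smul_smul]
    · intro j _ hj
      simp [smul_mul_assoc, mul_smul_comm, hb i j (Ne.symm hj)]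
    · intro h
      exact absurd (Finset.mem_univ i) h
  -- squares are multiples of w₀
  have hc : ∀ i : Fin (n + 2), ∃ c : F, b i * b i = c • (w₀ : A) := by
    intro i
    obtain ⟨c, hc⟩ := hw₀ ⟨b i * b i, hmem _ _⟩
    exact ⟨c, by simpa using (Subtype.ext_iff.mp hc).symm⟩
  choose c₀ hc₀ using hc
  -- the coefficients c₀ are nonzero (nondegeneracy)
  have hc0ne : ∀ i, c₀ i ≠ 0 := by
    intro i hci
    have hzero : b i * b i = 0 := by rw [hc₀ i, hci, zero_smul]
    have h1 : ∀ a : A, b i * a = 0 := by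
      intro a
      rw [hBrepr]
      apply Finset.sum_eq_zero
      intro j _
      rcases eq_or_ne j i with rfl | hj
      · rw [hzero, smul_zero]
      · rw [b.repr_self, Finsupp.single_apply, if_neg (fun h => hj (h.symm)), zero_mul,
          zero_smul]
    have h2 : ∀ a : A, a * b i = 0 := by
      intro a
      rw [hBrepr]
      apply Finset.sum_eq_zero
      intro j _
      rcases eq_or_ne j i with rfl | hj
      · rw [hzero, smul_zero]
      · rw [b.repr_self, Finsupp.single_apply, if_neg (fun h => hj (h.symm)), mul_zero,
          zero_smul]
    exact b.ne_zero i (hnd _ (fun a => ⟨h1 a, h2 a⟩))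
  -- product formula with w₀
  have hprod0 : ∀ x y : A, x * y = (∑ i, c₀ i * b.repr x i * b.repr y i) • (w₀ : A) := by
    intro x y
    rw [hBrepr, Finset.sum_smul]
    refine Finset.sum_congr rfl fun i _ => ?_
    rw [hc₀ i, smul_smul]
    congr 1
    ring
  set lam : F := ∑ i, c₀ i * b.repr (w₀ : A) i * b.repr (w₀ : A) i with hlam_def
  have hww0 : (w₀ : A) * (w₀ : A) = lam • (w₀ : A) := hprod0 _ _
  have hlam : lam ≠ 0 := by
    intro h0
    apply hsq2
    rw [mulSub, Submodule.span_eq_bot]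
    rintro z ⟨x, hx, y, hy, rfl⟩
    obtain ⟨a, ha⟩ := hw₀ ⟨x, hx⟩
    obtain ⟨d, hd⟩ := hw₀ ⟨y, hy⟩
    have hax : a • (w₀ : A) = x := congrArg Subtype.val ha
    have hdy : d • (w₀ : A) = y := congrArg Subtype.val hd
    rw [← hax, ← hdy, smul_mul_assoc, mul_smul_comm, hww0, h0, zero_smul, smul_zero,
      smul_zero]
  -- rescale
  set w : A := lam⁻¹ • (w₀ : A) with hw_def
  have hwne' : w ≠ 0 := by
    rw [hw_def]
    exact smul_ne_zero (inv_ne_zero hlam) hwne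
  set c : Fin (n + 2) → F := fun i => lam * c₀ i with hc_def
  have hcne : ∀ i, c i ≠ 0 := fun i => mul_ne_zero hlam (hc0ne i)
  have hbb : ∀ i, b i * b i = c i • w := by
    intro i
    rw [hc₀ i, hw_def, hc_def, smul_smul, mul_right_comm, mul_inv_cancel₀ hlam, one_mul]
  have hprod : ∀ x y : A, x * y = (∑ i, c i * b.repr x i * b.repr y i) • w := by
    intro x y
    rw [hBrepr, Finset.sum_smul]
    refine Finset.sum_congr rfl fun i _ => ?_
    rw [hbb i, smul_smul]
    congr 1
    ring
  -- w is idempotent-like: coefficient sum is 1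
  have hQw : ∑ i, c i * b.repr w i * b.repr w i = 1 := by
    have h1 : w * w = (∑ i, c i * b.repr w i * b.repr w i) • w := hprod w w
    have h2 : w * w = (1 : F) • w := by
      rw [hw_def, smul_mul_assoc, mul_smul_comm, hww0, smul_smul, smul_smul, one_smul]
      congr 1
      field_simp
    exact smul_left_injective F hwne' (h1.symm.trans h2)
  -- the bilinear form
  set B : LinearMap.BilinForm F A := LinearMap.mk₂ F
    (fun x y => ∑ i, c i * b.repr x i * b.repr y i)
    (fun x x' y => by
      simp only [map_add, Finsupp.coe_add, Pi.add_apply, mul_add, add_mul,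
        Finset.sum_add_distrib])
    (fun a x y => by
      simp only [map_smul, Finsupp.coe_smul, Pi.smul_apply, smul_eq_mul, Finset.mul_sum]
      exact Finset.sum_congr rfl fun i _ => by ring)
    (fun x y y' => by
      simp only [map_add, Finsupp.coe_add, Pi.add_apply, mul_add, add_mul,
        Finset.sum_add_distrib])
    (fun a x y => by
      simp only [map_smul, Finsupp.coe_smul, Pi.smul_apply, smul_eq_mul, Finset.mul_sum]
      exact Finset.sum_congr rfl fun i _ => by ring) with hB_def
  have hBapply : ∀ x y : A, B x y = ∑ i, c i * b.repr x i * b.repr y i := fun x y => rfl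
  have hBsymm : B.IsSymm := by
    refine LinearMap.BilinForm.isSymm_def.2 fun x y => ?_
    rw [hBapply, hBapply]
    exact Finset.sum_congr rfl fun i _ => by ring
  have hBnd : B.Nondegenerate := by
    refine ((LinearMap.BilinForm.isSymm_iff.1 hBsymm).isRefl.nondegenerate_iff_separatingLeft).2 ?_
    intro x hx
    have hcoord : ∀ j, b.repr x j = 0 := by
      intro j
      have hj := hx (b j)
      rw [hBapply] at hj
      rw [Finset.sum_eq_single j] at hj
      · rw [b.repr_self, Finsupp.single_apply, if_pos rfl, mul_one] at hj
        exact (mul_eq_zero.mp hj).resolve_left (hcne j)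
      · intro i _ hi
        rw [b.repr_self, Finsupp.single_apply, if_neg (fun h => hi h.symm), mul_zero]
      · intro h
        exact absurd (Finset.mem_univ j) h
    have : b.repr x = 0 := Finsupp.ext fun j => hcoord j
    exact (LinearEquiv.map_eq_zero_iff _).mp this
  have hprod' : ∀ x y : A, x * y = B x y • w := fun x y => by
    rw [hBapply]; exact hprod x y
  have hBww : B w w = 1 := by rw [hBapply]; exact hQw
  obtain ⟨u, hu0, hub⟩ := aux_orthonormal_basis (m := n + 1) hfr B hBsymm hBnd hBww
  have hBsum : ∀ x y : A, B x y = ∑ k, u.equivFun x k * u.equivFun y k := by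
    intro x y
    conv_lhs => rw [← u.sum_equivFun x, ← u.sum_equivFun y]
    simp [-Module.Basis.sum_repr, map_sum, LinearMap.sum_apply, map_smul, LinearMap.smul_apply, smul_eq_mul, hub,
      mul_ite, mul_one, mul_zero, Finset.sum_ite_eq, Finset.mul_sum]
    exact Finset.sum_congr rfl fun k _ => mul_comm _ _
  refine ⟨u.equivFun, fun x y => ?_⟩
  rw [hprod' x y, map_smul]
  funext k
  have hφw : u.equivFun w k = if k = 0 then 1 else 0 := by
    rw [← hu0, u.equivFun_self]
    rcases eq_or_ne k 0 with rfl | hk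
    · simp
    · rw [if_neg (fun h => hk h.symm), if_neg hk]
  rcases eq_or_ne k 0 with rfl | hk
  · simp only [Pi.smul_apply, smul_eq_mul, hφw, enMul, eq_self_iff_true, if_true, mul_one]
    exact hBsum x y
  · simp only [Pi.smul_apply, smul_eq_mul, hφw, enMul, if_neg hk, mul_zero]
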